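/- For every integer n ≥ 3, the graph K₂ × T_n (equivalently, the complete bipartite graph K_{n,n}) is super restricted edge-connected; that is, every minimum restricted edge-cut isolates an edge. -/

import Mathlib

open SimpleGraph

/-- The direct (tensor/Kronecker) product of two simple graphs:
`(u₁, v₁)` and `(u₂, v₂)` are adjacent iff `u₁u₂ ∈ E(G)` and `v₁v₂ ∈ E(H)`. -/
def tensorProd {α β : Type*} (G : SimpleGraph α) (H : SimpleGraph β) :
    SimpleGraph (α × β) where
  Adj x y := G.Adj x.1 y.1 ∧ H.Adj x.2 y.2
  symm := ⟨fun _ _ h => ⟨h.1.symm, h.2.symm⟩⟩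
  loopless := ⟨fun _ h => G.loopless.irrefl _ h.1⟩

/-- The direct product `G × Tₙ` of a simple graph `G` with the total graph `Tₙ`
(the complete graph `Kₙ` with a loop added at every vertex):  since `Tₙ` has all
possible edges and loops, `(u₁, v₁)` is adjacent to `(u₂, v₂)` iff `u₁u₂ ∈ E(G)`. -/
def totalProd {α : Type*} (G : SimpleGraph α) (n : ℕ) :
    SimpleGraph (α × Fin n) where
  Adj x y := G.Adj x.1 y.1
  symm := ⟨fun _ _ h => h.symm⟩
  loopless := ⟨fun _ h => G.loopless.irrefl _ h⟩

/-- The direct product `K₂ × Kₙ`. -/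
def K2timesKn (n : ℕ) : SimpleGraph (Fin 2 × Fin n) :=
  tensorProd (completeGraph (Fin 2)) (completeGraph (Fin n))

/-- The direct product `K₂ × Tₙ` (isomorphic to the complete bipartite graph `K_{n,n}`). -/
def K2timesTn (n : ℕ) : SimpleGraph (Fin 2 × Fin n) :=
  totalProd (completeGraph (Fin 2)) n

/-- `[A, V ∖ A]` : the set of edges of `G` with exactly one endpoint in `A`. -/
def cutEdges {α : Type*} (G : SimpleGraph α) (A : Set α) : Set (Sym2 α) :=
  {e | e ∈ G.edgeSet ∧ ∃ u v, e = s(u, v) ∧ u ∈ A ∧ v ∉ A}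

/-- `F` is an edge-cut of `G`: a set of edges whose deletion disconnects `G`. -/
def IsEdgeCut {α : Type*} (G : SimpleGraph α) (F : Set (Sym2 α)) : Prop :=
  F ⊆ G.edgeSet ∧ ¬ (G.deleteEdges F).Connected

/-- The edge-connectivity `λ(G)`: the minimum cardinality of an edge-cut. -/
noncomputable def edgeConn {α : Type*} (G : SimpleGraph α) : ℕ :=
  sInf {k | ∃ F : Finset (Sym2 α), IsEdgeCut G ↑F ∧ F.card = k}

/-- `G` is super edge-connected (super-λ): every minimum edge-cut is exactly the
set of edges incident with some vertex. -/
def SuperEdgeConnected {α : Type*} (G : SimpleGraph α) : Prop :=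
  ∀ F : Finset (Sym2 α), IsEdgeCut G ↑F → F.card = edgeConn G →
    ∃ v, (F : Set (Sym2 α)) = G.incidenceSet v

/-- `F` is a restricted edge-cut of `G`: its deletion disconnects `G` and every
connected component of `G − F` has at least two vertices. -/
def IsRestrictedEdgeCut {α : Type*} (G : SimpleGraph α) (F : Set (Sym2 α)) : Prop :=
  F ⊆ G.edgeSet ∧ ¬ (G.deleteEdges F).Connected ∧
    ∀ c : (G.deleteEdges F).ConnectedComponent, c.supp.Nontrivial

/-- The restricted edge-connectivity `λ'(G) : ℕ∞`: the minimum cardinality of a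
restricted edge-cut, and `+∞` (`⊤`) if no restricted edge-cut exists. -/
noncomputable def restrictedEdgeConn {α : Type*} (G : SimpleGraph α) : ℕ∞ :=
  sInf {k : ℕ∞ | ∃ F : Finset (Sym2 α), IsRestrictedEdgeCut G ↑F ∧ (F.card : ℕ∞) = k}

/-- `G` is super restricted edge-connected (super-λ'): every minimum restricted
edge-cut isolates an edge, i.e. some component of `G − F` is a single edge. -/
def SuperRestrictedEdgeConnected {α : Type*} (G : SimpleGraph α) : Prop :=
  ∀ F : Finset (Sym2 α), IsRestrictedEdgeCut G ↑F →
    (F.card : ℕ∞) = restrictedEdgeConn G →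
    ∃ u v, (G.deleteEdges ↑F).Adj u v ∧
      ((G.deleteEdges ↑F).connectedComponentMk u).supp = {u, v}

/-- The minimum edge-degree `ξ(G) = min { d(u) + d(v) − 2 : uv ∈ E(G) }`. -/
noncomputable def minEdgeDegree {α : Type*} (G : SimpleGraph α) : ℕ :=
  sInf {k | ∃ u v, G.Adj u v ∧ (G.neighborSet u).ncard + (G.neighborSet v).ncard - 2 = k}

section Aux

lemma adj_iff (n : ℕ) (x y : Fin 2 × Fin n) : (K2timesTn n).Adj x y ↔ x.1 ≠ y.1 := Iff.rfl

variable (n : ℕ) [NeZero n]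

def uu : Fin 2 × Fin n := (0, 0)
def vv : Fin 2 × Fin n := (1, 0)

def F0 : Finset (Sym2 (Fin 2 × Fin n)) :=
  ((Finset.univ : Finset (Fin n)).filter (· ≠ 0)).image (fun j => s(uu n, ((1 : Fin 2), j))) ∪
  ((Finset.univ : Finset (Fin n)).filter (· ≠ 0)).image (fun j => s(vv n, ((0 : Fin 2), j)))

lemma mem_F0 (e : Sym2 (Fin 2 × Fin n)) :
    e ∈ F0 n ↔ ∃ j : Fin n, j ≠ 0 ∧ (e = s(uu n, ((1:Fin 2), j)) ∨ e = s(vv n, ((0:Fin 2), j))) := by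
  simp only [F0, Finset.mem_union, Finset.mem_image, Finset.mem_filter, Finset.mem_univ, true_and]
  constructor
  · rintro (⟨j, hj, rfl⟩ | ⟨j, hj, rfl⟩) <;> exact ⟨j, hj, by simp⟩
  · rintro ⟨j, hj, (rfl | rfl)⟩
    · exact Or.inl ⟨j, hj, rfl⟩
    · exact Or.inr ⟨j, hj, rfl⟩

lemma F0_card : (F0 n).card = 2 * n - 2 := by
  rw [F0, Finset.card_union_of_disjoint, Finset.card_image_of_injective, Finset.card_image_of_injective]
  · have h : (Finset.univ.filter (· ≠ (0 : Fin n))) = Finset.univ.erase 0 := by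
      ext j; simp [Finset.mem_erase]
    rw [h, Finset.card_erase_of_mem (Finset.mem_univ _), Finset.card_univ, Fintype.card_fin]
    omega
  · intro j k h
    simp [uu, vv, Sym2.eq, Sym2.rel_iff', Prod.ext_iff] at h
    exact h
  · intro j k h
    simp [uu, vv, Sym2.eq, Sym2.rel_iff', Prod.ext_iff] at h
    exact h
  · rw [Finset.disjoint_left]
    rintro e he he'
    simp only [Finset.mem_image, Finset.mem_filter, Finset.mem_univ, true_and] at he he'
    obtain ⟨j, hj, rfl⟩ := he
    obtain ⟨k, hk, h⟩ := he'
    simp [Sym2.eq, Sym2.rel_iff', Prod.ext_iff, uu, vv] at h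
    simp_all [eq_comm]

lemma fin2_cases (i j : Fin 2) (h : i ≠ j) : (i = 0 ∧ j = 1) ∨ (i = 1 ∧ j = 0) := by
  fin_cases i <;> fin_cases j <;> simp_all

lemma fin2_ne (i : Fin 2) : i ≠ 0 ↔ i = 1 := by fin_cases i <;> simp

lemma adj_deleteF0 (x y : Fin 2 × Fin n) :
    ((K2timesTn n).deleteEdges ↑(F0 n)).Adj x y ↔ x.1 ≠ y.1 ∧ (x.2 = 0 ↔ y.2 = 0) := by
  rw [SimpleGraph.deleteEdges_adj]
  obtain ⟨x1, x2⟩ := x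
  obtain ⟨y1, y2⟩ := y
  constructor
  · rintro ⟨hxy, hF⟩
    rw [adj_iff] at hxy
    refine ⟨hxy, ?_⟩
    rcases eq_or_ne x2 0 with hx | hx <;> rcases eq_or_ne y2 0 with hy | hy
    · simp [hx, hy]
    · exfalso; apply hF
      rw [Finset.mem_coe, mem_F0]
      subst hx
      rcases fin2_cases _ _ hxy with ⟨h0, h1⟩ | ⟨h0, h1⟩ <;> subst h0 <;> subst h1
      · exact ⟨y2, hy, by simp [uu, vv, Sym2.eq_swap]⟩
      · exact ⟨y2, hy, by simp [uu, vv, Sym2.eq_swap]⟩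
    · exfalso; apply hF
      rw [Finset.mem_coe, mem_F0]
      subst hy
      rcases fin2_cases _ _ hxy with ⟨h0, h1⟩ | ⟨h0, h1⟩ <;> subst h0 <;> subst h1
      · exact ⟨x2, hx, by simp [uu, vv, Sym2.eq_swap]⟩
      · exact ⟨x2, hx, by simp [uu, vv, Sym2.eq_swap]⟩
    · simp [hx, hy]
  · rintro ⟨hxy, hiff⟩
    simp only at hxy hiff
    refine ⟨hxy, ?_⟩
    intro hmem
    rw [Finset.mem_coe, mem_F0] at hmem
    obtain ⟨j, hj, h | h⟩ := hmem <;> rw [Sym2.eq_iff] at h <;>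
      rcases h with ⟨h1, h2⟩ | ⟨h1, h2⟩ <;>
      · rw [Prod.ext_iff] at h1 h2
        simp [uu, vv] at h1 h2
        apply hj
        first
          | (rw [← h2.2]; exact hiff.1 h1.2)
          | (rw [← h1.2]; exact hiff.2 h2.2)
          | (rw [← h2.2]; exact hiff.2 h1.2)
          | (rw [← h1.2]; exact hiff.1 h2.2)

lemma reach_presF0 {x y : Fin 2 × Fin n}
    (h : ((K2timesTn n).deleteEdges ↑(F0 n)).Reachable x y) : x.2 = 0 ↔ y.2 = 0 := by
  obtain ⟨p⟩ := h
  induction p with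
  | nil => exact Iff.rfl
  | cons h p ih => exact ((adj_deleteF0 n _ _).1 h).2.trans ih

def flip2 (w : Fin 2 × Fin n) : Fin 2 × Fin n := (⟨1 - w.1.val, by omega⟩, w.2)

lemma flip2_adj (w : Fin 2 × Fin n) :
    ((K2timesTn n).deleteEdges ↑(F0 n)).Adj w (flip2 n w) := by
  rw [adj_deleteF0]
  refine ⟨?_, Iff.rfl⟩
  simp only [flip2]
  intro h
  rw [Fin.ext_iff] at h
  simp at h
  omega

lemma F0_restricted (hn : 3 ≤ n) : IsRestrictedEdgeCut (K2timesTn n) ↑(F0 n) := by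
  refine ⟨?_, ?_, ?_⟩
  · intro e he
    rw [Finset.mem_coe, mem_F0] at he
    obtain ⟨j, hj, rfl | rfl⟩ := he <;>
      · rw [SimpleGraph.mem_edgeSet]
        rw [adj_iff]
        simp [uu, vv]
  · intro hcon
    have h1 : (⟨1, by omega⟩ : Fin n) ≠ 0 := by
      intro h; rw [Fin.ext_iff] at h; simp at h
    have := reach_presF0 n (hcon.preconnected (uu n) ((0 : Fin 2), (⟨1, by omega⟩ : Fin n)))
    exact h1 (this.1 rfl)
  · intro c
    obtain ⟨w, rfl⟩ := c.exists_rep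
    have hadj := flip2_adj n w
    refine ⟨w, SimpleGraph.ConnectedComponent.mem_supp_iff _ _ |>.2 rfl, flip2 n w, ?_, ?_⟩
    · apply (SimpleGraph.ConnectedComponent.mem_supp_iff _ _).2
      exact SimpleGraph.ConnectedComponent.sound hadj.symm.reachable
    · intro h
      have := congrArg (fun p => (Prod.fst p).val) h
      simp only [flip2] at this
      omega

lemma rec_le (hn : 3 ≤ n) : restrictedEdgeConn (K2timesTn n) ≤ ((2 * n - 2 : ℕ) : ℕ∞) := by
  apply sInf_le
  exact ⟨F0 n, F0_restricted n hn, by rw [F0_card]⟩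

lemma exists_adj_of_reachable {V : Type*} {G : SimpleGraph V} {x y : V} (hxy : x ≠ y)
    (h : G.Reachable x y) : ∃ z, G.Adj x z := by
  obtain ⟨p⟩ := h
  cases p with
  | nil => exact absurd rfl hxy
  | cons h _ => exact ⟨_, h⟩

lemma comp_sides {G' : SimpleGraph (Fin 2 × Fin n)} (hle : G' ≤ K2timesTn n)
    (c : G'.ConnectedComponent) (hc : c.supp.Nontrivial) :
    (∃ x ∈ c.supp, x.1 = 0) ∧ (∃ y ∈ c.supp, y.1 = 1) := by
  obtain ⟨x, hx, y, hy, hxy⟩ := hc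
  rw [SimpleGraph.ConnectedComponent.mem_supp_iff] at hx hy
  have hr : G'.Reachable x y := SimpleGraph.ConnectedComponent.exact (hx.trans hy.symm)
  obtain ⟨z, hz⟩ := exists_adj_of_reachable hxy hr
  have hz1 : x.1 ≠ z.1 := hle hz
  have hzc : z ∈ c.supp := by
    rw [SimpleGraph.ConnectedComponent.mem_supp_iff, ← hx]
    exact SimpleGraph.ConnectedComponent.sound hz.symm.reachable
  have hxc : x ∈ c.supp := SimpleGraph.ConnectedComponent.mem_supp_iff _ _ |>.2 hx
  rcases fin2_cases _ _ hz1 with ⟨h0, h1⟩ | ⟨h0, h1⟩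
  · exact ⟨⟨x, hxc, h0⟩, ⟨z, hzc, h1⟩⟩
  · exact ⟨⟨z, hzc, h1⟩, ⟨x, hxc, h0⟩⟩

lemma side_card (i : Fin 2) :
    (Finset.univ.filter (fun w : Fin 2 × Fin n => w.1 = i)).card = n := by
  have : Finset.univ.filter (fun w : Fin 2 × Fin n => w.1 = i) = {i} ×ˢ Finset.univ := by
    ext w
    simp only [Finset.mem_filter, Finset.mem_univ, true_and, Finset.mem_product,
      Finset.mem_singleton, and_true]
  rw [this, Finset.card_product]
  simp

lemma part_card (A : Finset (Fin 2 × Fin n)) (p : Fin 2 × Fin n → Prop) [DecidablePred p] :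
    (A.filter p).card + (Aᶜ.filter p).card = (Finset.univ.filter p).card := by
  rw [← Finset.card_union_of_disjoint]
  · congr 1
    ext w
    simp only [Finset.mem_union, Finset.mem_filter, Finset.mem_compl, Finset.mem_univ, true_and]
    tauto
  · rw [Finset.disjoint_left]
    intro w hw hw'
    simp only [Finset.mem_filter, Finset.mem_compl] at hw hw'
    exact hw'.1 hw.1

lemma split_card (A : Finset (Fin 2 × Fin n)) :
    (A.filter (fun w => w.1 = 0)).card + (A.filter (fun w => w.1 = 1)).card = A.card := by
  have h := Finset.card_filter_add_card_filter_not (s := A) (p := fun w => w.1 = 0)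
  rw [← h]
  congr 1
  apply congrArg
  apply Finset.filter_congr
  intro w _
  simp [fin2_ne]

lemma arith_key (a b c d : ℤ) (ha : 1 ≤ a) (hb : 1 ≤ b) (hc : 1 ≤ c) (hd : 1 ≤ d)
    (hab : 3 ≤ a + b) (hcd : 3 ≤ c + d) (hn : a + c = b + d) :
    a + b + c + d ≤ a * d + b * c + 1 := by
  rcases le_or_gt a 1 with h1 | h1 <;> rcases le_or_gt b 1 with h2 | h2 <;>
    rcases le_or_gt c 1 with h3 | h3 <;> rcases le_or_gt d 1 with h4 | h4 <;>
    nlinarith [mul_nonneg (sub_nonneg.2 ha) (sub_nonneg.2 hd),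
      mul_nonneg (sub_nonneg.2 hb) (sub_nonneg.2 hc), (a-1)*(d-1), (b-1)*(c-1)]


end Aux

theorem stmt7 (n : ℕ) (hn : 3 ≤ n) : SuperRestrictedEdgeConnected (K2timesTn n) := by
  haveI : NeZero n := ⟨by omega⟩
  intro F hF hmin
  obtain ⟨hFsub, hFdis, hFnt⟩ := hF
  set G' := (K2timesTn n).deleteEdges ↑F with hG'
  have hub : F.card ≤ 2 * n - 2 := by
    have h1 : (F.card : ℕ∞) ≤ ((2 * n - 2 : ℕ) : ℕ∞) := by
      rw [hmin]; exact rec_le n hn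
    exact_mod_cast h1
  have hbd : ∀ (c : G'.ConnectedComponent) (x y : Fin 2 × Fin n),
      x ∈ c.supp → y ∉ c.supp → x.1 ≠ y.1 → s(x, y) ∈ F := by
    intro c x y hx hy hxy
    by_contra hmem
    apply hy
    rw [SimpleGraph.ConnectedComponent.mem_supp_iff] at hx ⊢
    rw [← hx]
    apply SimpleGraph.ConnectedComponent.sound
    have hadj : G'.Adj x y := by
      rw [hG', SimpleGraph.deleteEdges_adj]
      exact ⟨hxy, hmem⟩
    exact hadj.symm.reachable
  have hle' : G' ≤ K2timesTn n := SimpleGraph.deleteEdges_le _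
  have key : ∃ c : G'.ConnectedComponent, (Set.toFinite c.supp).toFinset.card = 2 := by
    by_contra hk
    push_neg at hk
    have h3 : ∀ c : G'.ConnectedComponent, 3 ≤ (Set.toFinite c.supp).toFinset.card := by
      intro c
      obtain ⟨x, hx, y, hy, hxy⟩ := hFnt c
      have h2 : 1 < (Set.toFinite c.supp).toFinset.card :=
        Finset.one_lt_card.2 ⟨x, (Set.Finite.mem_toFinset _).2 hx, y,
          (Set.Finite.mem_toFinset _).2 hy, hxy⟩
      have := hk c
      omega
    have hnp : ¬ G'.Preconnected := fun hp => hFdis ⟨hp⟩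
    rw [SimpleGraph.Preconnected] at hnp
    push_neg at hnp
    obtain ⟨x0, y0, hxy0⟩ := hnp
    set c := G'.connectedComponentMk x0 with hc
    set d := G'.connectedComponentMk y0 with hd
    have hcd : c ≠ d := fun h => hxy0 (SimpleGraph.ConnectedComponent.exact h)
    set A := (Set.toFinite c.supp).toFinset with hA
    set B := (Set.toFinite d.supp).toFinset with hB
    have hmemA : ∀ w, w ∈ A ↔ w ∈ c.supp := fun w => Set.Finite.mem_toFinset _
    have hmemB : ∀ w, w ∈ B ↔ w ∈ d.supp := fun w => Set.Finite.mem_toFinset _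
    have hBA : B ⊆ Aᶜ := by
      intro w hw
      rw [Finset.mem_compl]
      rw [hmemB, SimpleGraph.ConnectedComponent.mem_supp_iff] at hw
      rw [hmemA, SimpleGraph.ConnectedComponent.mem_supp_iff]
      intro h
      exact hcd (h.symm.trans hw)
    set a0 := (A.filter (fun w => w.1 = 0)).card with ha0d
    set a1 := (A.filter (fun w => w.1 = 1)).card with ha1d
    set b0 := (Aᶜ.filter (fun w => w.1 = 0)).card with hb0d
    set b1 := (Aᶜ.filter (fun w => w.1 = 1)).card with hb1d
    have hsum0 : a0 + b0 = n := by rw [ha0d, hb0d, part_card, side_card]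
    have hsum1 : a1 + b1 = n := by rw [ha1d, hb1d, part_card, side_card]
    have hA3 : 3 ≤ a0 + a1 := by
      rw [ha0d, ha1d, split_card]
      exact h3 c
    have hsides := comp_sides n hle' c (hFnt c)
    have ha0 : 1 ≤ a0 := by
      obtain ⟨⟨x, hx, hx0⟩, -⟩ := hsides
      apply Finset.card_pos.2
      exact ⟨x, Finset.mem_filter.2 ⟨(hmemA x).2 hx, hx0⟩⟩
    have ha1 : 1 ≤ a1 := by
      obtain ⟨-, ⟨y, hy, hy1⟩⟩ := hsides
      apply Finset.card_pos.2
      exact ⟨y, Finset.mem_filter.2 ⟨(hmemA y).2 hy, hy1⟩⟩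
    have hsidesd := comp_sides n hle' d (hFnt d)
    have hb0 : 1 ≤ b0 := by
      obtain ⟨⟨x, hx, hx0⟩, -⟩ := hsidesd
      apply Finset.card_pos.2
      exact ⟨x, Finset.mem_filter.2 ⟨hBA ((hmemB x).2 hx), hx0⟩⟩
    have hb1 : 1 ≤ b1 := by
      obtain ⟨-, ⟨y, hy, hy1⟩⟩ := hsidesd
      apply Finset.card_pos.2
      exact ⟨y, Finset.mem_filter.2 ⟨hBA ((hmemB y).2 hy), hy1⟩⟩
    have hB3 : 3 ≤ b0 + b1 := by
      have e1 : (B.filter (fun w => w.1 = 0)).card ≤ b0 :=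
        Finset.card_le_card (Finset.filter_subset_filter _ hBA)
      have e2 : (B.filter (fun w => w.1 = 1)).card ≤ b1 :=
        Finset.card_le_card (Finset.filter_subset_filter _ hBA)
      have e3 := split_card n B
      have e4 := h3 d
      rw [← hB] at e4
      omega
    set P := ((A ×ˢ Aᶜ).filter (fun p => p.1.1 ≠ p.2.1)) with hP
    have hinj : P.card ≤ F.card := by
      apply Finset.card_le_card_of_injOn (fun p => s(p.1, p.2))
      · intro p hp
        simp only [hP, Finset.mem_coe, Finset.mem_filter, Finset.mem_product] at hp
        refine hbd c p.1 p.2 ((hmemA _).1 hp.1.1) ?_ hp.2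
        intro hmem
        exact (Finset.mem_compl.1 hp.1.2) ((hmemA _).2 hmem)
      · intro p hp q hq h
        rw [hP] at hp hq
        simp only [Finset.coe_filter, Set.mem_setOf_eq, Finset.mem_coe,
          Finset.mem_product] at hp hq
        rw [Sym2.eq_iff] at h
        rcases h with ⟨h1, h2⟩ | ⟨h1, h2⟩
        · exact Prod.ext_iff.2 ⟨h1, h2⟩
        · exfalso
          apply Finset.mem_compl.1 hq.1.2
          rw [← h1]
          exact hp.1.1
    have hPcard : P.card = a0 * b1 + a1 * b0 := by
      have hunion : P = (A.filter (fun w => w.1 = 0)) ×ˢ (Aᶜ.filter (fun w => w.1 = 1)) ∪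
          (A.filter (fun w => w.1 = 1)) ×ˢ (Aᶜ.filter (fun w => w.1 = 0)) := by
        ext p
        simp only [hP, Finset.mem_filter, Finset.mem_product, Finset.mem_union]
        constructor
        · rintro ⟨⟨h1, h2⟩, h3⟩
          rcases fin2_cases _ _ h3 with ⟨u0, u1⟩ | ⟨u0, u1⟩
          · exact Or.inl ⟨⟨h1, u0⟩, h2, u1⟩
          · exact Or.inr ⟨⟨h1, u0⟩, h2, u1⟩
        · rintro (⟨⟨h1, u0⟩, h2, u1⟩ | ⟨⟨h1, u0⟩, h2, u1⟩) <;>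
            exact ⟨⟨h1, h2⟩, by rw [u0, u1]; decide⟩
      rw [hunion, Finset.card_union_of_disjoint, Finset.card_product, Finset.card_product]
      rw [Finset.disjoint_left]
      rintro ⟨p1, p2⟩ hp1 hp2
      rw [Finset.mem_product, Finset.mem_filter, Finset.mem_filter] at hp1 hp2
      have e1 : p1.1 = 0 := hp1.1.2
      have e2 : p1.1 = 1 := hp2.1.2
      rw [e1] at e2
      exact absurd e2 (by decide)
    have hZ : a0 + a1 + b0 + b1 ≤ a0 * b1 + a1 * b0 + 1 := by
      have := arith_key (a0 : ℤ) (a1 : ℤ) (b0 : ℤ) (b1 : ℤ)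
        (by exact_mod_cast ha0) (by exact_mod_cast ha1) (by exact_mod_cast hb0)
        (by exact_mod_cast hb1) (by exact_mod_cast hA3) (by exact_mod_cast hB3)
        (by push_cast; omega)
      exact_mod_cast this
    omega
  obtain ⟨c, hc2⟩ := key
  obtain ⟨u, v, huv, hset⟩ := Finset.card_eq_two.1 hc2
  have hsupp : c.supp = {u, v} := by
    have hco := (Set.toFinite c.supp).coe_toFinset
    rw [← hco, hset]
    simp
  have humem : u ∈ c.supp := by rw [hsupp]; exact Set.mem_insert _ _
  have hvmem : v ∈ c.supp := by rw [hsupp]; exact Set.mem_insert_of_mem _ rfl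
  have hcu : G'.connectedComponentMk u = c :=
    (SimpleGraph.ConnectedComponent.mem_supp_iff _ _).1 humem
  have hcv : G'.connectedComponentMk v = c :=
    (SimpleGraph.ConnectedComponent.mem_supp_iff _ _).1 hvmem
  have hr : G'.Reachable u v := SimpleGraph.ConnectedComponent.exact (hcu.trans hcv.symm)
  obtain ⟨z, hz⟩ := exists_adj_of_reachable huv hr
  have hzmem : z ∈ c.supp := by
    rw [SimpleGraph.ConnectedComponent.mem_supp_iff, ← hcu]
    exact SimpleGraph.ConnectedComponent.sound hz.symm.reachable
  rw [hsupp] at hzmem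
  have hzv : z = v := by
    rcases hzmem with rfl | rfl
    · exact absurd hz (G'.loopless.irrefl z)
    · rfl
  rw [hzv] at hz
  exact ⟨u, v, hz, by rw [hcu]; exact hsupp⟩
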